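/- Let g ∈ ℝ^d, θ̂ ∈ ℝ^d, γ > 0, and ℓ̂(θ) = c + gᵀ(θ - θ̂) + (γ/2)(gᵀ(θ - θ̂))². Then for any θ₁, θ₂: ℓ̂(θ₂) ≥ ℓ̂(θ₁) + ∇ℓ̂(θ₁)ᵀ(θ₂ - θ₁) + [γ / (2(1 + γ gᵀ(θ₁ - θ̂))²)]·(∇ℓ̂(θ₁)ᵀ(θ₂ - θ₁))², provided 1 + γ gᵀ(θ₁ - θ̂) ≠ 0. -/

import Mathlib

open Real

/-- Directional derivative condition for the quadratic surrogate
`ℓ̂(θ) = c + gᵀ(θ-θ̂) + (γ/2)(gᵀ(θ-θ̂))²` with gradient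
`∇ℓ̂(θ₁) = (1 + γ gᵀ(θ₁-θ̂)) g`: provided `1 + γ gᵀ(θ₁-θ̂) ≠ 0`,
`ℓ̂(θ₂) ≥ ℓ̂(θ₁) + ∇ℓ̂(θ₁)ᵀ(θ₂-θ₁)
  + (γ / (2(1 + γ gᵀ(θ₁-θ̂))²)) (∇ℓ̂(θ₁)ᵀ(θ₂-θ₁))²`. -/
theorem surrogate_ddc {d : ℕ} (c γ : ℝ) (hγ : 0 < γ)
    (g θhat : EuclideanSpace ℝ (Fin d)) :
    ∀ θ₁ θ₂ : EuclideanSpace ℝ (Fin d),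
      1 + γ * (inner ℝ g (θ₁ - θhat) : ℝ) ≠ 0 →
      c + (inner ℝ g (θ₂ - θhat) : ℝ) + γ / 2 * (inner ℝ g (θ₂ - θhat) : ℝ) ^ 2
        ≥ c + (inner ℝ g (θ₁ - θhat) : ℝ) + γ / 2 * (inner ℝ g (θ₁ - θhat) : ℝ) ^ 2
          + (inner ℝ ((1 + γ * (inner ℝ g (θ₁ - θhat) : ℝ)) • g) (θ₂ - θ₁) : ℝ)
          + γ / (2 * (1 + γ * (inner ℝ g (θ₁ - θhat) : ℝ)) ^ 2)
            * (inner ℝ ((1 + γ * (inner ℝ g (θ₁ - θhat) : ℝ)) • g) (θ₂ - θ₁) : ℝ) ^ 2 := by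
  intro θ₁ θ₂ h
  have hd : θ₂ - θ₁ = (θ₂ - θhat) - (θ₁ - θhat) := by abel
  set a : ℝ := inner ℝ g (θ₁ - θhat)
  set b : ℝ := inner ℝ g (θ₂ - θhat)
  have hi : (inner ℝ ((1 + γ * a) • g) (θ₂ - θ₁) : ℝ) = (1 + γ * a) * (b - a) := by
    rw [hd, real_inner_smul_left, inner_sub_right]
  rw [hi, ge_iff_le]
  have key : γ / (2 * (1 + γ * a) ^ 2) * ((1 + γ * a) * (b - a)) ^ 2
      = γ / 2 * (b - a) ^ 2 := by
    field_simp
  rw [key]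
  nlinarith [sq_nonneg (b - a)]
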